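/- Let ν be a nonnegative finite symmetric Borel measure on ℝ^N, and let φ : ℝ → ℝ be nondecreasing, globally Lipschitz, with φ(0) = 0. Let w, ŵ, ρ, ρ̂ ∈ L^1(ℝ^N). (a) If w is an a.e.-subsolution of (EP) with right-hand side ρ, ŵ is an a.e.-supersolution of (EP) with right-hand side ρ̂, and ρ ≤ ρ̂ a.e., then w ≤ ŵ a.e. (b) If w is an a.e.-solution of (EP) with right-hand side ρ, then ‖w‖_{L^1(ℝ^N)} ≤ ‖ρ‖_{L^1(ℝ^N)}. -/

import Mathlib

open MeasureTheory ENNReal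
open scoped ENNReal NNReal

noncomputable section

/-- The zero-order Lévy operator `L^ν[ψ](x) := ∫ (ψ(x+z) − ψ(x)) dν(z)`. -/
def Lnu {N : ℕ} (ν : Measure (EuclideanSpace ℝ (Fin N)))
    (ψ : EuclideanSpace ℝ (Fin N) → ℝ) (x : EuclideanSpace ℝ (Fin N)) : ℝ :=
  ∫ z, (ψ (x + z) - ψ x) ∂ν

section Aux
variable {N : ℕ} (ν : Measure (EuclideanSpace ℝ (Fin N))) [IsFiniteMeasure ν]

/-- If `f = f'` a.e., then `Lnu ν f = Lnu ν f'` a.e. -/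
lemma aux_ae_translate {f f' : EuclideanSpace ℝ (Fin N) → ℝ}
    (hff' : f =ᵐ[volume] f') :
    ∀ᵐ x ∂(volume : Measure (EuclideanSpace ℝ (Fin N))), Lnu ν f x = Lnu ν f' x := by
  set S := toMeasurable (volume : Measure (EuclideanSpace ℝ (Fin N))) {x | f x ≠ f' x} with hSdef
  have hSm : MeasurableSet S := measurableSet_toMeasurable _ _
  have hS0 : volume S = 0 := by
    rw [hSdef, measure_toMeasurable]
    exact hff'
  have hSsub : {x | f x ≠ f' x} ⊆ S := subset_toMeasurable _ _
  have hTm : MeasurableSet {p : EuclideanSpace ℝ (Fin N) × EuclideanSpace ℝ (Fin N) | p.1 + p.2 ∈ S} :=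
    (measurable_fst.add measurable_snd) hSm
  have hT : (volume.prod ν) {p : EuclideanSpace ℝ (Fin N) × EuclideanSpace ℝ (Fin N) | p.1 + p.2 ∈ S} = 0 := by
    rw [Measure.prod_apply_symm hTm]
    have : ∀ z : EuclideanSpace ℝ (Fin N),
        (volume : Measure (EuclideanSpace ℝ (Fin N)))
          ((fun x => (x, z)) ⁻¹' {p : EuclideanSpace ℝ (Fin N) × EuclideanSpace ℝ (Fin N) | p.1 + p.2 ∈ S}) = 0 := by
      intro z
      have : ((fun x => (x, z)) ⁻¹' {p : EuclideanSpace ℝ (Fin N) × EuclideanSpace ℝ (Fin N) | p.1 + p.2 ∈ S})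
          = (fun x => x + z) ⁻¹' S := rfl
      rw [this, measure_preimage_add_right]
      exact hS0
    simp only [this]
    simp
  have hae : ∀ᵐ p ∂((volume : Measure (EuclideanSpace ℝ (Fin N))).prod ν), p.1 + p.2 ∉ S := by
    rw [ae_iff]
    simpa using hT
  have hae2 := Measure.ae_ae_of_ae_prod hae
  filter_upwards [hae2, hff'] with x hx hfx
  unfold Lnu
  apply integral_congr_ae
  filter_upwards [hx] with z hz
  have : f (x + z) = f' (x + z) := by
    by_contra h
    exact hz (hSsub h)
  rw [this, hfx]


/-- Prod integrability of translate. -/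
lemma aux_prod_integrable {g : EuclideanSpace ℝ (Fin N) → ℝ}
    (hg : Measurable g) (hgi : Integrable g volume) :
    Integrable (fun p : EuclideanSpace ℝ (Fin N) × EuclideanSpace ℝ (Fin N) => g (p.1 + p.2))
      ((volume : Measure (EuclideanSpace ℝ (Fin N))).prod ν) := by
  have hm : Measurable fun p : EuclideanSpace ℝ (Fin N) × EuclideanSpace ℝ (Fin N) => g (p.1 + p.2) :=
    hg.comp (measurable_fst.add measurable_snd)
  refine ⟨hm.aestronglyMeasurable, ?_⟩
  rw [HasFiniteIntegral]
  rw [lintegral_prod_symm _ (by exact (hm.enorm).aemeasurable)]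
  have : ∀ z : EuclideanSpace ℝ (Fin N),
      ∫⁻ x, ‖g (x + z)‖ₑ ∂(volume : Measure (EuclideanSpace ℝ (Fin N)))
        = ∫⁻ x, ‖g x‖ₑ ∂(volume : Measure (EuclideanSpace ℝ (Fin N))) := by
    intro z
    exact (measurePreserving_add_right volume z).lintegral_comp hg.enorm
  simp only [this]
  rw [lintegral_const]
  exact ENNReal.mul_lt_top hgi.2 (measure_lt_top ν _)

lemma aux_ae_slice_integrable {g : EuclideanSpace ℝ (Fin N) → ℝ}
    (hg : Measurable g) (hgi : Integrable g volume) :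
    ∀ᵐ x ∂(volume : Measure (EuclideanSpace ℝ (Fin N))), Integrable (fun z => g (x + z)) ν :=
  ((integrable_prod_iff ((hg.comp (measurable_fst.add measurable_snd)).aestronglyMeasurable)).mp
    (aux_prod_integrable ν hg hgi)).1

lemma aux_norm_int_integrable {g : EuclideanSpace ℝ (Fin N) → ℝ}
    (hg : Measurable g) (hgi : Integrable g volume) :
    Integrable (fun x => ∫ z, ‖g (x + z)‖ ∂ν) (volume : Measure (EuclideanSpace ℝ (Fin N))) :=
  ((integrable_prod_iff ((hg.comp (measurable_fst.add measurable_snd)).aestronglyMeasurable)).mp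
    (aux_prod_integrable ν hg hgi)).2

lemma aux_int_integrable {g : EuclideanSpace ℝ (Fin N) → ℝ}
    (hg : Measurable g) (hgi : Integrable g volume) :
    Integrable (fun x => ∫ z, g (x + z) ∂ν) (volume : Measure (EuclideanSpace ℝ (Fin N))) :=
  (aux_prod_integrable ν hg hgi).integral_prod_left

/-- The double integral identity. -/
lemma aux_double_integral {g : EuclideanSpace ℝ (Fin N) → ℝ}
    (hg : Measurable g) (hgi : Integrable g volume) :
    ∫ x, (∫ z, g (x + z) ∂ν) ∂(volume : Measure (EuclideanSpace ℝ (Fin N)))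
      = (ν Set.univ).toReal * ∫ x, g x ∂(volume : Measure (EuclideanSpace ℝ (Fin N))) := by
  rw [integral_integral_swap (by exact aux_prod_integrable ν hg hgi)]
  have : ∀ z : EuclideanSpace ℝ (Fin N),
      ∫ x, g (x + z) ∂(volume : Measure (EuclideanSpace ℝ (Fin N)))
        = ∫ x, g x ∂(volume : Measure (EuclideanSpace ℝ (Fin N))) := by
    intro z
    exact integral_add_right_eq_self g z
  simp only [this]
  rw [integral_const]
  simp [smul_eq_mul, measureReal_def]


lemma aux_lnu_sm {g : EuclideanSpace ℝ (Fin N) → ℝ} (hg : Measurable g) :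
    StronglyMeasurable (Lnu ν g) := by
  have hm : Measurable fun p : EuclideanSpace ℝ (Fin N) × EuclideanSpace ℝ (Fin N) =>
      g (p.1 + p.2) - g p.1 :=
    (hg.comp (measurable_fst.add measurable_snd)).sub (hg.comp measurable_fst)
  exact StronglyMeasurable.integral_prod_right
    (f := fun x z => g (x + z) - g x) hm.stronglyMeasurable

lemma aux_lnu_integrable {g : EuclideanSpace ℝ (Fin N) → ℝ}
    (hg : Measurable g) (hgi : Integrable g volume) :
    Integrable (Lnu ν g) (volume : Measure (EuclideanSpace ℝ (Fin N))) := by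
  set c := (ν Set.univ).toReal with hc
  have hF : Integrable (fun x => (∫ z, ‖g (x + z)‖ ∂ν) + c * ‖g x‖)
      (volume : Measure (EuclideanSpace ℝ (Fin N))) :=
    (aux_norm_int_integrable ν hg hgi).add ((hgi.norm).const_mul c)
  refine Integrable.mono' hF ((aux_lnu_sm ν hg).aestronglyMeasurable) ?_
  filter_upwards [aux_ae_slice_integrable ν hg hgi] with x hx
  have h1 : Integrable (fun z => g (x + z) - g x) ν := hx.sub (integrable_const _)
  have h2 : ‖Lnu ν g x‖ ≤ ∫ z, ‖g (x + z) - g x‖ ∂ν := norm_integral_le_integral_norm _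
  refine h2.trans ?_
  have h3 : ∫ z, ‖g (x + z) - g x‖ ∂ν ≤ ∫ z, (‖g (x + z)‖ + ‖g x‖) ∂ν := by
    refine integral_mono h1.norm (hx.norm.add (integrable_const _)) ?_
    intro z
    exact norm_sub_le _ _
  refine h3.trans ?_
  rw [integral_add hx.norm (integrable_const _), integral_const, smul_eq_mul, measureReal_def]

lemma aux_smul_lnu_integrable {g s : EuclideanSpace ℝ (Fin N) → ℝ}
    (hg : Measurable g) (hgi : Integrable g volume)
    (hs : Measurable s) (hs1 : ∀ x, |s x| ≤ 1) :
    Integrable (fun x => s x * Lnu ν g x) (volume : Measure (EuclideanSpace ℝ (Fin N))) := by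
  refine Integrable.mono (aux_lnu_integrable ν hg hgi).norm
    (hs.aestronglyMeasurable.mul (aux_lnu_sm ν hg).aestronglyMeasurable) ?_
  refine Filter.Eventually.of_forall fun x => ?_
  rw [norm_norm, norm_mul, Real.norm_eq_abs (s x)]
  exact mul_le_of_le_one_left (norm_nonneg _) (hs1 x)

lemma aux_key {g s : EuclideanSpace ℝ (Fin N) → ℝ}
    (hg : Measurable g) (hgi : Integrable g volume)
    (hs : Measurable s) (hs1 : ∀ x, |s x| ≤ 1)
    (hkey : ∀ x y, s x * g y ≤ s y * g y) :
    ∫ x, s x * Lnu ν g x ∂(volume : Measure (EuclideanSpace ℝ (Fin N))) ≤ 0 := by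
  set c := (ν Set.univ).toReal with hc
  set h : EuclideanSpace ℝ (Fin N) → ℝ := fun y => s y * g y with hhdef
  have hh : Measurable h := hs.mul hg
  have hbound : ∀ y, ‖h y‖ ≤ ‖g y‖ := by
    intro y
    rw [hhdef]
    simp only [norm_mul, Real.norm_eq_abs]
    calc |s y| * |g y| ≤ 1 * |g y| := by
          exact mul_le_mul_of_nonneg_right (hs1 y) (abs_nonneg _)
      _ = |g y| := one_mul _
  have hhi : Integrable h volume :=
    Integrable.mono hgi.norm hh.aestronglyMeasurable
      (Filter.Eventually.of_forall fun y => by simpa using hbound y)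
  -- The right-hand side function
  have hRi : Integrable (fun x => (∫ z, h (x + z) ∂ν) - c * h x)
      (volume : Measure (EuclideanSpace ℝ (Fin N))) :=
    (aux_int_integrable ν hh hhi).sub (hhi.const_mul c)
  have hLi : Integrable (fun x => s x * Lnu ν g x)
      (volume : Measure (EuclideanSpace ℝ (Fin N))) :=
    aux_smul_lnu_integrable ν hg hgi hs hs1
  have hmono : ∀ᵐ x ∂(volume : Measure (EuclideanSpace ℝ (Fin N))),
      s x * Lnu ν g x ≤ (∫ z, h (x + z) ∂ν) - c * h x := by
    filter_upwards [aux_ae_slice_integrable ν hg hgi] with x hx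
    have hhx : Integrable (fun z => h (x + z)) ν := by
      refine Integrable.mono hx.norm
        ((hh.comp (measurable_const.add measurable_id)).aestronglyMeasurable) ?_
      exact Filter.Eventually.of_forall fun z => by simpa using hbound (x + z)
    have e1 : Lnu ν g x = (∫ z, g (x + z) ∂ν) - c * g x := by
      unfold Lnu
      rw [integral_sub hx (integrable_const _), integral_const, smul_eq_mul, measureReal_def]
    rw [e1, mul_sub]
    have e2 : s x * ∫ z, g (x + z) ∂ν = ∫ z, s x * g (x + z) ∂ν := by
      rw [integral_const_mul]
    rw [e2]
    have e3 : ∫ z, s x * g (x + z) ∂ν ≤ ∫ z, h (x + z) ∂ν := by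
      refine integral_mono (hx.const_mul (s x)) hhx ?_
      intro z
      exact hkey x (x + z)
    have e4 : s x * (c * g x) = c * h x := by rw [hhdef]; ring
    rw [e4]
    exact sub_le_sub_right e3 _
  have := integral_mono_ae hLi hRi hmono
  refine this.trans ?_
  rw [integral_sub (aux_int_integrable ν hh hhi) (hhi.const_mul c),
    aux_double_integral ν hh hhi, integral_const_mul]
  simp [hc]

end Aux
theorem stmt6 {N : ℕ} (hN : 1 ≤ N)
    (ν : Measure (EuclideanSpace ℝ (Fin N))) [IsFiniteMeasure ν]
    (hsym : ν.map (fun z => -z) = ν)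
    (φ : ℝ → ℝ) (hmono : Monotone φ)
    (L : ℝ≥0) (hLip : LipschitzWith L φ) (hφ0 : φ 0 = 0)
    (w wh ρ ρ' : EuclideanSpace ℝ (Fin N) → ℝ)
    (hw : Integrable w volume) (hwh : Integrable wh volume)
    (hρ : Integrable ρ volume) (hρ' : Integrable ρ' volume) :
    -- (a) Comparison
    ((∀ᵐ x ∂(volume : Measure (EuclideanSpace ℝ (Fin N))),
        w x - Lnu ν (fun y => φ (w y)) x ≤ ρ x) →
     (∀ᵐ x ∂(volume : Measure (EuclideanSpace ℝ (Fin N))),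
        ρ' x ≤ wh x - Lnu ν (fun y => φ (wh y)) x) →
     (∀ᵐ x ∂(volume : Measure (EuclideanSpace ℝ (Fin N))), ρ x ≤ ρ' x) →
     (∀ᵐ x ∂(volume : Measure (EuclideanSpace ℝ (Fin N))), w x ≤ wh x)) ∧
    -- (b) L¹-bound
    ((∀ᵐ x ∂(volume : Measure (EuclideanSpace ℝ (Fin N))),
        w x - Lnu ν (fun y => φ (w y)) x = ρ x) →
     eLpNorm w 1 volume ≤ eLpNorm ρ 1 volume) := by
  -- measurable representatives
  have hw' := hw.1
  have hwh' := hwh.1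
  set w' := hw'.mk w with hw'def
  set wh' := hwh'.mk wh with hwh'def
  have hw'm : Measurable w' := hw'.stronglyMeasurable_mk.measurable
  have hwh'm : Measurable wh' := hwh'.stronglyMeasurable_mk.measurable
  have hww' : w =ᵐ[volume] w' := hw'.ae_eq_mk
  have hwhwh' : wh =ᵐ[volume] wh' := hwh'.ae_eq_mk
  have hw'i : Integrable w' volume := hw.congr hww'
  have hwh'i : Integrable wh' volume := hwh.congr hwhwh'
  have phi_int : ∀ v : EuclideanSpace ℝ (Fin N) → ℝ, Measurable v → Integrable v volume →
      Integrable (fun x => φ (v x)) volume := by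
    intro v hvm hvi
    refine Integrable.mono (hvi.norm.const_mul (L : ℝ))
      ((hLip.continuous.measurable.comp hvm).aestronglyMeasurable) ?_
    refine Filter.Eventually.of_forall fun x => ?_
    have h1 := hLip.dist_le_mul (v x) 0
    rw [Real.dist_eq, Real.dist_eq] at h1
    simp only [hφ0, sub_zero] at h1
    simp only [Real.norm_eq_abs]
    rw [abs_of_nonneg (mul_nonneg L.coe_nonneg (abs_nonneg (v x)))]
    exact h1
  constructor
  · -- part (a)
    intro hsub hsup hle
    set f1 : EuclideanSpace ℝ (Fin N) → ℝ := fun y => φ (w' y) with hf1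
    set f2 : EuclideanSpace ℝ (Fin N) → ℝ := fun y => φ (wh' y) with hf2
    have hf1m : Measurable f1 := hLip.continuous.measurable.comp hw'm
    have hf2m : Measurable f2 := hLip.continuous.measurable.comp hwh'm
    have hf1i : Integrable f1 volume := phi_int w' hw'm hw'i
    have hf2i : Integrable f2 volume := phi_int wh' hwh'm hwh'i
    set g : EuclideanSpace ℝ (Fin N) → ℝ := fun x => f1 x - f2 x with hgdef
    have hgm : Measurable g := hf1m.sub hf2m
    have hgi : Integrable g volume := hf1i.sub hf2i
    set s : EuclideanSpace ℝ (Fin N) → ℝ := fun x => if 0 < w' x - wh' x then 1 else 0 with hsdef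
    have hsm : Measurable s :=
      Measurable.ite (measurableSet_lt measurable_const (hw'm.sub hwh'm))
        measurable_const measurable_const
    have hs0 : ∀ x, 0 ≤ s x := by
      intro x; simp only [hsdef]; split <;> norm_num
    have hs1 : ∀ x, |s x| ≤ 1 := by
      intro x; simp only [hsdef]; split <;> norm_num
    have hkey : ∀ x y, s x * g y ≤ s y * g y := by
      intro x y
      have hsx0 : 0 ≤ s x := hs0 x
      have hsx1 : s x ≤ 1 := by simp only [hsdef]; split <;> norm_num
      by_cases hy : 0 < w' y - wh' y
      · have hsy : s y = 1 := by simp only [hsdef, if_pos hy]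
        have hgy : 0 ≤ g y := by
          have h2 := hmono (le_of_lt (sub_pos.mp hy))
          simp only [hgdef, hf1, hf2]
          linarith
        rw [hsy, one_mul]
        nlinarith
      · have hsy : s y = 0 := by simp only [hsdef, if_neg hy]
        have hgy : g y ≤ 0 := by
          have h2 : w' y ≤ wh' y := by push_neg at hy; linarith
          have h3 := hmono h2
          simp only [hgdef, hf1, hf2]
          linarith
        rw [hsy, zero_mul]
        nlinarith
    have htw : ∀ᵐ x ∂(volume : Measure (EuclideanSpace ℝ (Fin N))),
        Lnu ν (fun y => φ (w y)) x = Lnu ν f1 x :=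
      aux_ae_translate ν (by filter_upwards [hww'] with x h; show φ (w x) = φ (w' x); rw [h])
    have htwh : ∀ᵐ x ∂(volume : Measure (EuclideanSpace ℝ (Fin N))),
        Lnu ν (fun y => φ (wh y)) x = Lnu ν f2 x :=
      aux_ae_translate ν (by filter_upwards [hwhwh'] with x h; show φ (wh x) = φ (wh' x); rw [h])
    have hdiff : ∀ᵐ x ∂(volume : Measure (EuclideanSpace ℝ (Fin N))),
        Lnu ν f1 x - Lnu ν f2 x = Lnu ν g x := by
      filter_upwards [aux_ae_slice_integrable ν hf1m hf1i,
        aux_ae_slice_integrable ν hf2m hf2i] with x h1 h2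
      unfold Lnu
      have h1' : Integrable (fun z => f1 (x + z) - f1 x) ν := h1.sub (integrable_const _)
      have h2' : Integrable (fun z => f2 (x + z) - f2 x) ν := h2.sub (integrable_const _)
      have e : ∫ z, ((f1 (x + z) - f1 x) - (f2 (x + z) - f2 x)) ∂ν
          = (∫ z, (f1 (x + z) - f1 x) ∂ν) - ∫ z, (f2 (x + z) - f2 x) ∂ν :=
        integral_sub h1' h2'
      rw [← e]
      apply integral_congr_ae
      refine Filter.Eventually.of_forall fun z => ?_
      simp only [hgdef]
      ring
    have hsLi : Integrable (fun x => s x * Lnu ν g x) volume :=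
      aux_smul_lnu_integrable ν hgm hgi hsm hs1
    have hPi : Integrable (fun x => max (w' x - wh' x) 0) volume := (hw'i.sub hwh'i).pos_part
    have hbd : ∀ᵐ x ∂(volume : Measure (EuclideanSpace ℝ (Fin N))),
        max (w' x - wh' x) 0 ≤ s x * Lnu ν g x := by
      filter_upwards [hsub, hsup, hle, hww', hwhwh', htw, htwh, hdiff]
        with x h1 h2 h3 h4 h5 h6 h7 h8
      have hsx0 : 0 ≤ s x := hs0 x
      have hsx1 : s x ≤ 1 := by simp only [hsdef]; split <;> norm_num
      have hu : w' x - wh' x ≤ Lnu ν g x + (ρ x - ρ' x) := by linarith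
      have hmax : max (w' x - wh' x) 0 = s x * (w' x - wh' x) := by
        simp only [hsdef]
        split
        · rw [one_mul]; exact max_eq_left (le_of_lt (by assumption))
        · rw [zero_mul]; exact max_eq_right (by linarith [not_lt.mp (by assumption)])
      rw [hmax]
      have h9 : s x * (w' x - wh' x) ≤ s x * (Lnu ν g x + (ρ x - ρ' x)) :=
        mul_le_mul_of_nonneg_left hu hsx0
      nlinarith
    have hint : ∫ x, max (w' x - wh' x) 0 ∂(volume : Measure (EuclideanSpace ℝ (Fin N))) ≤ 0 :=
      (integral_mono_ae hPi hsLi hbd).trans (aux_key ν hgm hgi hsm hs1 hkey)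
    have hup : 0 ≤ ∫ x, max (w' x - wh' x) 0 ∂(volume : Measure (EuclideanSpace ℝ (Fin N))) :=
      integral_nonneg fun x => le_max_right _ _
    have hzero : (fun x => max (w' x - wh' x) 0) =ᵐ[(volume : Measure (EuclideanSpace ℝ (Fin N)))] 0 :=
      (integral_eq_zero_iff_of_nonneg (fun x => le_max_right _ _) hPi).mp (le_antisymm hint hup)
    filter_upwards [hzero, hww', hwhwh'] with x h0 h4 h5
    have h6 : max (w' x - wh' x) 0 = 0 := h0
    have h7 := le_max_left (w' x - wh' x) 0
    rw [h4, h5]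
    linarith
  · -- part (b)
    intro heq
    set g : EuclideanSpace ℝ (Fin N) → ℝ := fun x => φ (w' x) with hgdef
    have hgm : Measurable g := hLip.continuous.measurable.comp hw'm
    have hgi : Integrable g volume := phi_int w' hw'm hw'i
    set s : EuclideanSpace ℝ (Fin N) → ℝ :=
      fun x => if 0 < w' x then 1 else if w' x < 0 then -1 else 0 with hsdef
    have hsm : Measurable s :=
      Measurable.ite (measurableSet_lt measurable_const hw'm) measurable_const
        (Measurable.ite (measurableSet_lt hw'm measurable_const)
          measurable_const measurable_const)
    have hs1 : ∀ x, |s x| ≤ 1 := by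
      intro x; simp only [hsdef]
      split
      · norm_num
      · split <;> norm_num
    have hsg : ∀ y, s y * g y = |g y| := by
      intro y
      show (if 0 < w' y then (1:ℝ) else if w' y < 0 then -1 else 0) * φ (w' y) = |φ (w' y)|
      rcases lt_trichotomy 0 (w' y) with h | h | h
      · have hge : 0 ≤ φ (w' y) := by have := hmono h.le; rwa [hφ0] at this
        rw [if_pos h, one_mul, abs_of_nonneg hge]
      · rw [if_neg (by rw [← h]; exact lt_irrefl 0), if_neg (by rw [← h]; exact lt_irrefl 0),
          zero_mul, ← h, hφ0, abs_zero]
      · have hle' : φ (w' y) ≤ 0 := by have := hmono h.le; rwa [hφ0] at this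
        rw [if_neg (not_lt.mpr h.le), if_pos h, abs_of_nonpos hle', neg_one_mul]
    have hsw : ∀ y, s y * w' y = |w' y| := by
      intro y
      show (if 0 < w' y then (1:ℝ) else if w' y < 0 then -1 else 0) * w' y = |w' y|
      rcases lt_trichotomy 0 (w' y) with h | h | h
      · rw [if_pos h, one_mul, abs_of_nonneg h.le]
      · rw [if_neg (by rw [← h]; exact lt_irrefl 0), if_neg (by rw [← h]; exact lt_irrefl 0),
          zero_mul, ← h, abs_zero]
      · rw [if_neg (not_lt.mpr h.le), if_pos h, abs_of_nonpos h.le, neg_one_mul]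
    have hkey : ∀ x y, s x * g y ≤ s y * g y := by
      intro x y
      rw [hsg y]
      calc s x * g y ≤ |s x * g y| := le_abs_self _
        _ = |s x| * |g y| := abs_mul _ _
        _ ≤ 1 * |g y| := mul_le_mul_of_nonneg_right (hs1 x) (abs_nonneg _)
        _ = |g y| := one_mul _
    have htw : ∀ᵐ x ∂(volume : Measure (EuclideanSpace ℝ (Fin N))),
        Lnu ν (fun y => φ (w y)) x = Lnu ν g x :=
      aux_ae_translate ν (by filter_upwards [hww'] with x h; show φ (w x) = φ (w' x); rw [h])
    have hsρi : Integrable (fun x => s x * ρ x) volume := by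
      refine Integrable.mono hρ.norm (hsm.aestronglyMeasurable.mul hρ.1) ?_
      refine Filter.Eventually.of_forall fun x => ?_
      rw [norm_norm, norm_mul, Real.norm_eq_abs (s x)]
      exact mul_le_of_le_one_left (norm_nonneg _) (hs1 x)
    have hsLi : Integrable (fun x => s x * Lnu ν g x) volume :=
      aux_smul_lnu_integrable ν hgm hgi hsm hs1
    have haeq : ∀ᵐ x ∂(volume : Measure (EuclideanSpace ℝ (Fin N))),
        |w' x| = s x * ρ x + s x * Lnu ν g x := by
      filter_upwards [heq, hww', htw] with x h1 h2 h3
      rw [← hsw x, ← h2]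
      have h4 : w x = ρ x + Lnu ν g x := by rw [← h3]; linarith
      rw [h4, mul_add]
    have habs : ∫ x, |w' x| ∂(volume : Measure (EuclideanSpace ℝ (Fin N)))
        = ∫ x, (s x * ρ x + s x * Lnu ν g x) ∂(volume : Measure (EuclideanSpace ℝ (Fin N))) :=
      integral_congr_ae haeq
    have h2 : ∫ x, s x * ρ x ∂(volume : Measure (EuclideanSpace ℝ (Fin N)))
        ≤ ∫ x, |ρ x| ∂(volume : Measure (EuclideanSpace ℝ (Fin N))) := by
      refine integral_mono hsρi hρ.abs fun x => ?_
      calc s x * ρ x ≤ |s x * ρ x| := le_abs_self _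
        _ = |s x| * |ρ x| := abs_mul _ _
        _ ≤ 1 * |ρ x| := mul_le_mul_of_nonneg_right (hs1 x) (abs_nonneg _)
        _ = |ρ x| := one_mul _
    have hfinal : ∫ x, |w' x| ∂(volume : Measure (EuclideanSpace ℝ (Fin N)))
        ≤ ∫ x, |ρ x| ∂(volume : Measure (EuclideanSpace ℝ (Fin N))) := by
      rw [habs, integral_add hsρi hsLi]
      have h3 := aux_key ν hgm hgi hsm hs1 hkey
      linarith
    rw [eLpNorm_one_eq_lintegral_enorm, eLpNorm_one_eq_lintegral_enorm,
      ← ofReal_integral_norm_eq_lintegral_enorm hw, ← ofReal_integral_norm_eq_lintegral_enorm hρ]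
    apply ENNReal.ofReal_le_ofReal
    have ew : ∫ x, ‖w x‖ ∂(volume : Measure (EuclideanSpace ℝ (Fin N)))
        = ∫ x, |w' x| ∂(volume : Measure (EuclideanSpace ℝ (Fin N))) :=
      integral_congr_ae (by filter_upwards [hww'] with x h; rw [Real.norm_eq_abs, h])
    have eρ : ∫ x, ‖ρ x‖ ∂(volume : Measure (EuclideanSpace ℝ (Fin N)))
        = ∫ x, |ρ x| ∂(volume : Measure (EuclideanSpace ℝ (Fin N))) := by
      simp [Real.norm_eq_abs]
    rw [ew, eρ]
    exact hfinal
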